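/- Let S ⊆ ℝ be a measurable set, and let (a_n)_{n≥1}, (b_n)_{n≥1}, (c_n)_{n≥0} be real sequences with c_0 = 0 such that for every n ≥ 1: c_{n−1} ≤ a_n < b_n ≤ c_n, the intersection S ∩ [c_{n−1}, c_n] equals the open interval (a_n, b_n), and c_n − b_n ≥ (3/2)·(b_n − a_n). Then for every n ≥ 1, λ(S ∩ [0, c_n]) ≤ (2/3)·c_n, where λ denotes Lebesgue measure on ℝ. -/
import Mathlib


open Set MeasureTheory

/-- The finite-stage cumulative bound from Lemma 2: if for each `n ≥ 1` the
set `S` meets the window `[c (n-1), c n]` exactly in the open interval `(a n, b n)`, with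
`c (n-1) ≤ a n < b n ≤ c n` and the excursion `c n - b n` at least `(3/2)` times the visit
length `b n - a n`, then `λ(S ∩ [0, c n]) ≤ (2/3) * c n` for all `n ≥ 1`. -/
theorem ergodic_nongeneric_stmt1 (S : Set ℝ) (hS : MeasurableSet S)
    (a b c : ℕ → ℝ) (hc0 : c 0 = 0)
    (horder : ∀ n : ℕ, 1 ≤ n → c (n - 1) ≤ a n ∧ a n < b n ∧ b n ≤ c n)
    (hvisit : ∀ n : ℕ, 1 ≤ n → S ∩ Icc (c (n - 1)) (c n) = Ioo (a n) (b n))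
    (hgap : ∀ n : ℕ, 1 ≤ n → (3 / 2) * (b n - a n) ≤ c n - b n) :
    ∀ n : ℕ, 1 ≤ n → (volume (S ∩ Icc 0 (c n))).toReal ≤ (2 / 3) * c n := by
  -- nonnegativity of c
  have hcnonneg : ∀ n : ℕ, 0 ≤ c n := by
    intro n
    induction n with
    | zero => simp [hc0]
    | succ k ih =>
      obtain ⟨h1, h2, h3⟩ := horder (k + 1) (Nat.le_add_left 1 k)
      simp only [Nat.add_sub_cancel] at h1
      linarith
  have key : ∀ n : ℕ, 1 ≤ n →
      volume (S ∩ Icc 0 (c n)) ≤ ENNReal.ofReal ((2 / 3) * c n) := by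
    intro n hn
    induction n, hn using Nat.le_induction with
    | base =>
      have hv := hvisit 1 le_rfl
      simp only [Nat.sub_self, hc0] at hv
      rw [hv, Real.volume_Ioo]
      apply ENNReal.ofReal_le_ofReal
      obtain ⟨h1, h2, h3⟩ := horder 1 le_rfl
      have hg := hgap 1 le_rfl
      rw [hc0] at h1
      linarith
    | succ n hn ih =>
      obtain ⟨h1, h2, h3⟩ := horder (n + 1) (Nat.le_add_left 1 n)
      have hg := hgap (n + 1) (Nat.le_add_left 1 n)
      simp only [Nat.add_sub_cancel] at h1
      have hv := hvisit (n + 1) (Nat.le_add_left 1 n)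
      simp only [Nat.add_sub_cancel] at hv
      have hsub : S ∩ Icc 0 (c (n + 1)) ⊆
          (S ∩ Icc 0 (c n)) ∪ (S ∩ Icc (c n) (c (n + 1))) := by
        rintro x ⟨hxS, hx0, hx1⟩
        rcases le_total x (c n) with h | h
        · exact Or.inl ⟨hxS, hx0, h⟩
        · exact Or.inr ⟨hxS, h, hx1⟩
      calc volume (S ∩ Icc 0 (c (n + 1)))
          ≤ volume (S ∩ Icc 0 (c n)) + volume (S ∩ Icc (c n) (c (n + 1))) :=
            le_trans (measure_mono hsub) (measure_union_le _ _)
        _ ≤ ENNReal.ofReal ((2 / 3) * c n) + ENNReal.ofReal (b (n + 1) - a (n + 1)) := by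
            rw [hv, Real.volume_Ioo]
            exact add_le_add ih le_rfl
        _ ≤ ENNReal.ofReal ((2 / 3) * c (n + 1)) := by
            rw [← ENNReal.ofReal_add (mul_nonneg (by norm_num) (hcnonneg n)) (by linarith)]
            apply ENNReal.ofReal_le_ofReal
            linarith
  intro n hn
  exact ENNReal.toReal_le_of_le_ofReal (mul_nonneg (by norm_num) (hcnonneg n)) (key n hn)
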